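/- arXiv:1511.08290 — 3 statements merged into one kernel-verified Lean document; each statement's English description precedes it below -/
import Mathlib

section
/- Using the Q-function bound Q(x) ≤ (1/12) e^{-x²/2} + (1/4) e^{-2x²/3} for x ≥ 0, the expected error probability c·E[Q(sqrt(g χ/N₀)) · 1{χ ≥ τ}] over an exponential χ with density (1/(2σ²))e^{-x/(2σ²)} is bounded above by (c/12)(ρ/σ)² exp(-τ/(2ρ²)) + (c/4)(ρ₁/σ)² exp(-τ/(2ρ₁²)), where ρ = sqrt(σ²N₀/(gσ²+N₀)), g₁ = 4g/3, ρ₁ = sqrt(σ²N₀/(g₁σ²+N₀)). -/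
open MeasureTheory Real

lemma integral_exp_neg_mul_Ioi' {a : ℝ} (ha : 0 < a) (τ : ℝ) :
    (∫ x in Set.Ioi τ, Real.exp (-(a * x))) = Real.exp (-(a * τ)) / a := by
  have hderiv : ∀ x ∈ Set.Ici τ,
      HasDerivAt (fun x => -Real.exp (-(a * x)) / a) (Real.exp (-(a * x))) x := by
    intro x _
    have h1 : HasDerivAt (fun x : ℝ => -(a * x)) (-a) x := by
      simpa using ((hasDerivAt_id x).const_mul a).fun_neg
    have h2 : HasDerivAt (fun x => -Real.exp (-(a * x)) / a) (-(Real.exp (-(a * x)) * -a) / a) x :=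
      (h1.exp).fun_neg.div_const a
    convert h2 using 1
    field_simp
  have hint : IntegrableOn (fun x => Real.exp (-(a * x))) (Set.Ioi τ) := by
    simpa [mul_comm] using exp_neg_integrableOn_Ioi τ ha
  have h1 : Filter.Tendsto (fun x : ℝ => -(a * x)) Filter.atTop Filter.atBot := by
    have := Filter.Tendsto.const_mul_atTop ha (Filter.tendsto_id (α := ℝ) (x := Filter.atTop))
    exact Filter.tendsto_neg_atBot_iff.mpr (by simpa using this)
  have htend : Filter.Tendsto (fun x => -Real.exp (-(a * x)) / a) Filter.atTop (nhds 0) := by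
    have h2 := ((Real.tendsto_exp_atBot.comp h1).neg).div_const a
    simpa using h2
  have := MeasureTheory.integral_Ioi_of_hasDerivAt_of_tendsto' hderiv hint htend
  rw [this]
  ring

/-- Using the bound `Q x ≤ (1/12) e^{-x²/2} + (1/4) e^{-2x²/3}` for `x ≥ 0`,
the error term `c · E[Q(√(gχ/N₀)) · 1{χ ≥ τ}]` over an exponential `χ` with density
`(1/(2σ²)) e^{-x/(2σ²)}` is bounded by
`(c/12)(ρ/σ)² e^{-τ/(2ρ²)} + (c/4)(ρ₁/σ)² e^{-τ/(2ρ₁²)}`. -/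
theorem ber_tail_term_bound (σ c g N₀ τ : ℝ) (hσ : 0 < σ) (hc : 0 < c) (hg : 0 < g)
    (hN : 0 < N₀) (hτ : 0 ≤ τ)
    (Q : ℝ → ℝ) (hQmeas : Measurable Q) (hQnonneg : ∀ x, 0 ≤ Q x)
    (hQbound : ∀ x, 0 ≤ x → Q x ≤ (1/12) * Real.exp (-x^2 / 2) + (1/4) * Real.exp (-2 * x^2 / 3))
    (g₁ ρ ρ₁ : ℝ) (hg₁ : g₁ = 4 * g / 3)
    (hρ : ρ = Real.sqrt (σ^2 * N₀ / (g * σ^2 + N₀)))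
    (hρ₁ : ρ₁ = Real.sqrt (σ^2 * N₀ / (g₁ * σ^2 + N₀))) :
    c * ∫ x in Set.Ioi τ,
        Q (Real.sqrt (g * x / N₀)) * ((1 / (2 * σ^2)) * Real.exp (-x / (2 * σ^2)))
      ≤ (c/12) * (ρ/σ)^2 * Real.exp (-τ / (2 * ρ^2))
        + (c/4) * (ρ₁/σ)^2 * Real.exp (-τ / (2 * ρ₁^2)) := by
  have hσ2 : (0:ℝ) < σ^2 := by positivity
  have hg₁pos : 0 < g₁ := by rw [hg₁]; positivity
  set a₁ : ℝ := g/(2*N₀) + 1/(2*σ^2) with ha₁def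
  set a₂ : ℝ := g₁/(2*N₀) + 1/(2*σ^2) with ha₂def
  have ha₁ : 0 < a₁ := by positivity
  have ha₂ : 0 < a₂ := by positivity
  have hρ2 : ρ^2 = σ^2*N₀/(g*σ^2+N₀) := by rw [hρ, sq_sqrt (by positivity)]
  have hρ₁2 : ρ₁^2 = σ^2*N₀/(g₁*σ^2+N₀) := by rw [hρ₁, sq_sqrt (by positivity)]
  have hρpos : 0 < ρ^2 := by rw [hρ2]; positivity
  have hρ₁pos : 0 < ρ₁^2 := by rw [hρ₁2]; positivity
  have hd1 : g*σ^2+N₀ ≠ 0 := by positivity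
  have hd2 : g₁*σ^2+N₀ ≠ 0 := by positivity
  have ha₁ρ : a₁ = 1/(2*ρ^2) := by rw [ha₁def, hρ2]; field_simp
  have ha₂ρ : a₂ = 1/(2*ρ₁^2) := by rw [ha₂def, hρ₁2, hg₁]; field_simp
  have hbound : ∀ x ∈ Set.Ioi τ,
      Q (Real.sqrt (g*x/N₀)) * ((1/(2*σ^2)) * Real.exp (-x/(2*σ^2)))
        ≤ (1/(2*σ^2)) * ((1/12)*Real.exp (-(a₁*x)) + (1/4)*Real.exp (-(a₂*x))) := by
    intro x hx
    have hx0 : 0 ≤ x := le_trans hτ (le_of_lt hx)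
    have hsq : (Real.sqrt (g*x/N₀))^2 = g*x/N₀ := sq_sqrt (by positivity)
    have hQ := hQbound _ (Real.sqrt_nonneg (g*x/N₀))
    rw [hsq] at hQ
    have hdens : (0:ℝ) ≤ (1/(2*σ^2)) * Real.exp (-x/(2*σ^2)) := by positivity
    have e1 : Real.exp (-(g*x/N₀)/2) * Real.exp (-x/(2*σ^2)) = Real.exp (-(a₁*x)) := by
      rw [← Real.exp_add]; congr 1; rw [ha₁def]; field_simp; ring
    have e2 : Real.exp (-2*(g*x/N₀)/3) * Real.exp (-x/(2*σ^2)) = Real.exp (-(a₂*x)) := by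
      rw [← Real.exp_add]; congr 1; rw [ha₂def, hg₁]; field_simp; ring
    calc Q (Real.sqrt (g*x/N₀)) * ((1/(2*σ^2)) * Real.exp (-x/(2*σ^2)))
        ≤ ((1/12)*Real.exp (-(g*x/N₀)/2) + (1/4)*Real.exp (-2*(g*x/N₀)/3))
            * ((1/(2*σ^2)) * Real.exp (-x/(2*σ^2))) :=
          mul_le_mul_of_nonneg_right (by simpa using hQ) hdens
      _ = (1/(2*σ^2)) * ((1/12)*(Real.exp (-(g*x/N₀)/2) * Real.exp (-x/(2*σ^2)))
            + (1/4)*(Real.exp (-2*(g*x/N₀)/3) * Real.exp (-x/(2*σ^2)))) := by ring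
      _ = (1/(2*σ^2)) * ((1/12)*Real.exp (-(a₁*x)) + (1/4)*Real.exp (-(a₂*x))) := by
          rw [e1, e2]
  have hint₁ : IntegrableOn (fun x => Real.exp (-(a₁*x))) (Set.Ioi τ) := by
    simpa [mul_comm] using exp_neg_integrableOn_Ioi τ ha₁
  have hint₂ : IntegrableOn (fun x => Real.exp (-(a₂*x))) (Set.Ioi τ) := by
    simpa [mul_comm] using exp_neg_integrableOn_Ioi τ ha₂
  have hintB : IntegrableOn
      (fun x => (1/(2*σ^2)) * ((1/12)*Real.exp (-(a₁*x)) + (1/4)*Real.exp (-(a₂*x))))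
      (Set.Ioi τ) :=
    ((hint₁.const_mul _).add (hint₂.const_mul _)).const_mul _
  have hmeasf : AEStronglyMeasurable
      (fun x => Q (Real.sqrt (g*x/N₀)) * ((1/(2*σ^2)) * Real.exp (-x/(2*σ^2))))
      (volume.restrict (Set.Ioi τ)) := by
    apply Measurable.aestronglyMeasurable
    exact (hQmeas.comp (Real.continuous_sqrt.measurable.comp
        ((measurable_const.mul measurable_id).div_const N₀))).mul
      ((Real.measurable_exp.comp ((measurable_id.neg).div_const _)).const_mul _)
  have hintf : IntegrableOn
      (fun x => Q (Real.sqrt (g*x/N₀)) * ((1/(2*σ^2)) * Real.exp (-x/(2*σ^2))))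
      (Set.Ioi τ) := by
    apply Integrable.mono' hintB hmeasf
    filter_upwards [ae_restrict_mem measurableSet_Ioi] with x hx
    rw [Real.norm_eq_abs, abs_of_nonneg (mul_nonneg (hQnonneg _) (by positivity))]
    exact hbound x hx
  have hle := setIntegral_mono_on hintf hintB measurableSet_Ioi hbound
  have hcalc : (∫ x in Set.Ioi τ,
        (1/(2*σ^2)) * ((1/12)*Real.exp (-(a₁*x)) + (1/4)*Real.exp (-(a₂*x))))
      = (1/(2*σ^2)) * ((1/12)*(Real.exp (-(a₁*τ))/a₁) + (1/4)*(Real.exp (-(a₂*τ))/a₂)) := by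
    rw [MeasureTheory.integral_const_mul, integral_add (hint₁.const_mul _) (hint₂.const_mul _),
      MeasureTheory.integral_const_mul, MeasureTheory.integral_const_mul,
      integral_exp_neg_mul_Ioi' ha₁ τ, integral_exp_neg_mul_Ioi' ha₂ τ]
  have hfinal : c * ((1/(2*σ^2)) * ((1/12)*(Real.exp (-(a₁*τ))/a₁) + (1/4)*(Real.exp (-(a₂*τ))/a₂)))
      = (c/12) * (ρ/σ)^2 * Real.exp (-τ / (2 * ρ^2))
        + (c/4) * (ρ₁/σ)^2 * Real.exp (-τ / (2 * ρ₁^2)) := by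
    rw [ha₁ρ, ha₂ρ, show -(1/(2*ρ^2)*τ) = -τ/(2*ρ^2) by ring,
      show -(1/(2*ρ₁^2)*τ) = -τ/(2*ρ₁^2) by ring]
    field_simp
  calc c * ∫ x in Set.Ioi τ,
        Q (Real.sqrt (g * x / N₀)) * ((1 / (2 * σ^2)) * Real.exp (-x / (2 * σ^2)))
      ≤ c * ∫ x in Set.Ioi τ,
        (1/(2*σ^2)) * ((1/12)*Real.exp (-(a₁*x)) + (1/4)*Real.exp (-(a₂*x))) :=
        mul_le_mul_of_nonneg_left hle hc.le
    _ = _ := by rw [hcalc]; exact hfinal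
end

section
/- For the first round of the CCSR scheme, the BER satisfies P_{e1} ≤ (c/12)(ρ/σ)² e^{-τ/(2ρ²)} + (c/4)(ρ₁/σ)² e^{-τ/(2ρ₁²)} + (c/12)(ρ/σ)⁴(1 - e^{-τ/(2ρ²)}) + (c/4)(ρ₁/σ)⁴(1 - e^{-τ/(2ρ₁²)}), where P_{e1} = c·E[1{χ₁≥τ} Q(sqrt(gχ₁/N₀)) + 1{χ₁<τ} Q(sqrt(g(χ₁+χ₂)/N₀))] with χ₁, χ₂ i.i.d. exponential of density (1/(2σ²))e^{-x/(2σ²)}. -/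
open MeasureTheory Real
open Filter

lemma exp_int_Ioi (a t : ℝ) (ha : 0 < a) :
    ∫ x in Set.Ioi t, Real.exp (-(a * x)) = Real.exp (-(a * t)) / a := by
  have hderiv : ∀ x ∈ Set.Ici t,
      HasDerivAt (fun x => -Real.exp (-(a * x)) / a) (Real.exp (-(a * x))) x := by
    intro x _
    have h1 : HasDerivAt (fun x : ℝ => -(a * x)) (-a) x := by
      simpa using ((hasDerivAt_id x).const_mul a).fun_neg
    have h2 := h1.exp
    have h3 := (h2.div_const a).fun_neg
    have e : (fun x => -Real.exp (-(a * x)) / a) = fun i => -(Real.exp (-(a * i)) / a) := by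
      ext y; ring
    rw [e]
    exact h3.congr_deriv (by rw [mul_neg, neg_div, neg_neg, mul_div_assoc, div_self ha.ne', mul_one])
  have hint : IntegrableOn (fun x => Real.exp (-(a * x))) (Set.Ioi t) := by
    simpa [neg_mul] using exp_neg_integrableOn_Ioi t ha
  have htend : Tendsto (fun x => -Real.exp (-(a * x)) / a) atTop (nhds 0) := by
    have h1 : Tendsto (fun x : ℝ => a * x) atTop atTop :=
      Tendsto.const_mul_atTop ha tendsto_id
    have h2 : Tendsto (fun x : ℝ => Real.exp (-(a * x))) atTop (nhds 0) :=
      Real.tendsto_exp_neg_atTop_nhds_zero.comp h1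
    simpa [neg_div] using (h2.div_const a).neg
  have := MeasureTheory.integral_Ioi_of_hasDerivAt_of_tendsto' hderiv hint htend
  rw [this]; ring

lemma exp_int_Ioc (a τ : ℝ) (ha : 0 < a) (hτ : 0 ≤ τ) :
    ∫ x in Set.Ioc 0 τ, Real.exp (-(a * x)) = (1 - Real.exp (-(a * τ))) / a := by
  rw [← intervalIntegral.integral_of_le hτ]
  have h : ∫ x in (0:ℝ)..τ, Real.exp (-(a * x)) = ∫ x in (0:ℝ)..τ, Real.exp ((-a) * x) := by
    simp [neg_mul]
  rw [h, intervalIntegral.integral_comp_mul_left Real.exp (by linarith : (-a) ≠ 0)]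
  rw [integral_exp]
  have : a * a⁻¹ = 1 := mul_inv_cancel₀ (ne_of_gt ha)
  simp only [mul_zero, Real.exp_zero, smul_eq_mul, neg_mul]
  field_simp
  linear_combination (0:ℝ) * this


set_option maxHeartbeats 1000000 in
/-- Round-1 CCSR BER upper bound: with `χ₁, χ₂` i.i.d. exponential of density
`(1/(2σ²)) e^{-x/(2σ²)}`, the BER
`P_{e1} = c·E[1{χ₁≥τ} Q(√(gχ₁/N₀)) + 1{χ₁<τ} Q(√(g(χ₁+χ₂)/N₀))]` satisfies
`P_{e1} ≤ (c/12)(ρ/σ)² e^{-τ/(2ρ²)} + (c/4)(ρ₁/σ)² e^{-τ/(2ρ₁²)}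
        + (c/12)(ρ/σ)⁴(1 - e^{-τ/(2ρ²)}) + (c/4)(ρ₁/σ)⁴(1 - e^{-τ/(2ρ₁²)})`. -/
theorem ccsr_round1_ber_bound (σ c g N₀ τ : ℝ) (hσ : 0 < σ) (hc : 0 < c) (hg : 0 < g)
    (hN : 0 < N₀) (hτ : 0 ≤ τ)
    (Q : ℝ → ℝ) (hQmeas : Measurable Q) (hQnonneg : ∀ x, 0 ≤ Q x)
    (hQbound : ∀ x, 0 ≤ x → Q x ≤ (1/12) * Real.exp (-x^2 / 2) + (1/4) * Real.exp (-2 * x^2 / 3))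
    (g₁ ρ ρ₁ : ℝ) (hg₁ : g₁ = 4 * g / 3)
    (hρ : ρ = Real.sqrt (σ^2 * N₀ / (g * σ^2 + N₀)))
    (hρ₁ : ρ₁ = Real.sqrt (σ^2 * N₀ / (g₁ * σ^2 + N₀))) :
    c * ((∫ x in Set.Ioi τ,
            Q (Real.sqrt (g * x / N₀)) * ((1 / (2 * σ^2)) * Real.exp (-x / (2 * σ^2))))
        + ∫ x in Set.Ioc (0:ℝ) τ, ∫ y in Set.Ioi (0:ℝ),
            Q (Real.sqrt (g * (x + y) / N₀))
              * ((1 / (2 * σ^2)) * Real.exp (-x / (2 * σ^2)))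
              * ((1 / (2 * σ^2)) * Real.exp (-y / (2 * σ^2))))
      ≤ (c/12) * (ρ/σ)^2 * Real.exp (-τ / (2 * ρ^2))
        + (c/4) * (ρ₁/σ)^2 * Real.exp (-τ / (2 * ρ₁^2))
        + (c/12) * (ρ/σ)^4 * (1 - Real.exp (-τ / (2 * ρ^2)))
        + (c/4) * (ρ₁/σ)^4 * (1 - Real.exp (-τ / (2 * ρ₁^2))) := by
  have hσ2 : (0:ℝ) < σ^2 := by positivity
  have hg₁pos : 0 < g₁ := by rw [hg₁]; positivity
  set a := g / (2*N₀) + 1/(2*σ^2) with ha_def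
  set a₁ := g₁ / (2*N₀) + 1/(2*σ^2) with ha₁_def
  have ha : 0 < a := by positivity
  have ha₁ : 0 < a₁ := by positivity
  -- ρ algebra
  have h2a : 2*a = (g*σ^2+N₀)/(σ^2*N₀) := by
    rw [ha_def]; field_simp
  have h2a₁ : 2*a₁ = (g₁*σ^2+N₀)/(σ^2*N₀) := by
    rw [ha₁_def]; field_simp
  have hρ2 : ρ^2 = 1/(2*a) := by
    rw [hρ, Real.sq_sqrt (by positivity), h2a, one_div_div]
  have hρ₁2 : ρ₁^2 = 1/(2*a₁) := by
    rw [hρ₁, Real.sq_sqrt (by positivity), h2a₁, one_div_div]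
  have hτa : -τ / (2*ρ^2) = -(a*τ) := by
    rw [hρ2]; field_simp [ha.ne']
  have hτa₁ : -τ / (2*ρ₁^2) = -(a₁*τ) := by
    rw [hρ₁2]; field_simp [ha₁.ne']
  have hrs : (ρ/σ)^2 = 1/(2*σ^2*a) := by
    rw [div_pow, hρ2, div_div, one_div, one_div, mul_comm]
    congr 1; ring
  have hrs₁ : (ρ₁/σ)^2 = 1/(2*σ^2*a₁) := by
    rw [div_pow, hρ₁2, div_div, one_div, one_div, mul_comm]
    congr 1; ring
  -- pointwise Q bound
  have key : ∀ u : ℝ, 0 ≤ u → Q (Real.sqrt (g*u/N₀)) ≤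
      (1/12) * Real.exp (-(g/(2*N₀))*u) + (1/4) * Real.exp (-(g₁/(2*N₀))*u) := by
    intro u hu
    have hgu : (0:ℝ) ≤ g*u/N₀ := by positivity
    have h := hQbound _ (Real.sqrt_nonneg (g*u/N₀))
    rw [Real.sq_sqrt hgu] at h
    have e1 : -(g*u/N₀) / 2 = -(g/(2*N₀))*u := by field_simp
    have e2 : -2*(g*u/N₀) / 3 = -(g₁/(2*N₀))*u := by rw [hg₁]; field_simp; ring
    rw [e1, e2] at h
    exact h
  -- exp merging
  have mea : ∀ u : ℝ, Real.exp (-(g/(2*N₀))*u) * Real.exp (-u/(2*σ^2)) = Real.exp (-(a*u)) := by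
    intro u; rw [← Real.exp_add, ha_def]; congr 1; ring
  have mea₁ : ∀ u : ℝ, Real.exp (-(g₁/(2*N₀))*u) * Real.exp (-u/(2*σ^2)) = Real.exp (-(a₁*u)) := by
    intro u; rw [← Real.exp_add, ha₁_def]; congr 1; ring
  have mea2 : ∀ u v : ℝ, Real.exp (-(g/(2*N₀))*(u+v)) *
      (Real.exp (-u/(2*σ^2)) * Real.exp (-v/(2*σ^2))) = Real.exp (-(a*u)) * Real.exp (-(a*v)) := by
    intro u v; rw [← Real.exp_add, ← Real.exp_add, ← Real.exp_add, ha_def]; congr 1; ring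
  have mea2₁ : ∀ u v : ℝ, Real.exp (-(g₁/(2*N₀))*(u+v)) *
      (Real.exp (-u/(2*σ^2)) * Real.exp (-v/(2*σ^2))) = Real.exp (-(a₁*u)) * Real.exp (-(a₁*v)) := by
    intro u v; rw [← Real.exp_add, ← Real.exp_add, ← Real.exp_add, ha₁_def]; congr 1; ring
  -- integrability of exponentials
  have ie : ∀ (b t : ℝ), 0 < b → IntegrableOn (fun x => Real.exp (-(b*x))) (Set.Ioi t) := by
    intro b t hb; simpa [neg_mul] using exp_neg_integrableOn_Ioi t hb
  -- Part 1
  have hb1 : IntegrableOn (fun x => (1/(2*σ^2)) *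
      ((1/12) * Real.exp (-(a*x)) + (1/4) * Real.exp (-(a₁*x)))) (Set.Ioi τ) :=
    (((ie a τ ha).const_mul _).add ((ie a₁ τ ha₁).const_mul _)).const_mul _
  have hT1 : (∫ x in Set.Ioi τ,
        Q (Real.sqrt (g * x / N₀)) * ((1 / (2 * σ^2)) * Real.exp (-x / (2 * σ^2))))
      ≤ (1/(2*σ^2)) * ((1/12) * (Real.exp (-(a*τ))/a) + (1/4) * (Real.exp (-(a₁*τ))/a₁)) := by
    have step1 : (∫ x in Set.Ioi τ,
          Q (Real.sqrt (g * x / N₀)) * ((1 / (2 * σ^2)) * Real.exp (-x / (2 * σ^2))))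
        ≤ ∫ x in Set.Ioi τ, (1/(2*σ^2)) *
          ((1/12) * Real.exp (-(a*x)) + (1/4) * Real.exp (-(a₁*x))) := by
      refine integral_mono_of_nonneg (Filter.Eventually.of_forall fun x => ?_) hb1
        (Filter.eventually_of_mem (self_mem_ae_restrict measurableSet_Ioi) fun x hx => ?_)
      · exact mul_nonneg (hQnonneg _) (by positivity)
      · have hx0 : (0:ℝ) ≤ x := le_trans hτ (le_of_lt hx)
        calc Q (Real.sqrt (g * x / N₀)) * ((1 / (2 * σ^2)) * Real.exp (-x / (2 * σ^2)))
            ≤ ((1/12) * Real.exp (-(g/(2*N₀))*x) + (1/4) * Real.exp (-(g₁/(2*N₀))*x))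
              * ((1 / (2 * σ^2)) * Real.exp (-x / (2 * σ^2))) :=
              mul_le_mul_of_nonneg_right (key x hx0) (by positivity)
          _ = (1/(2*σ^2)) * ((1/12) * Real.exp (-(a*x)) + (1/4) * Real.exp (-(a₁*x))) := by
              rw [← mea x, ← mea₁ x]; ring
    refine step1.trans_eq ?_
    rw [MeasureTheory.integral_const_mul,
      integral_add ((ie a τ ha).const_mul _) ((ie a₁ τ ha₁).const_mul _),
      MeasureTheory.integral_const_mul, MeasureTheory.integral_const_mul,
      exp_int_Ioi a τ ha, exp_int_Ioi a₁ τ ha₁]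
  -- Part 2 inner bound
  have hinner_nonneg : ∀ x : ℝ, 0 ≤ ∫ y in Set.Ioi (0:ℝ),
      Q (Real.sqrt (g * (x + y) / N₀))
        * ((1 / (2 * σ^2)) * Real.exp (-x / (2 * σ^2)))
        * ((1 / (2 * σ^2)) * Real.exp (-y / (2 * σ^2))) := by
    intro x
    refine integral_nonneg fun y => ?_
    exact mul_nonneg (mul_nonneg (hQnonneg _) (by positivity)) (by positivity)
  have hinner : ∀ x ∈ Set.Ioc (0:ℝ) τ, (∫ y in Set.Ioi (0:ℝ),
      Q (Real.sqrt (g * (x + y) / N₀))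
        * ((1 / (2 * σ^2)) * Real.exp (-x / (2 * σ^2)))
        * ((1 / (2 * σ^2)) * Real.exp (-y / (2 * σ^2))))
      ≤ (1/12) * (1/(2*σ^2))^2 * (1/a) * Real.exp (-(a*x))
        + (1/4) * (1/(2*σ^2))^2 * (1/a₁) * Real.exp (-(a₁*x)) := by
    intro x hx
    have hx0 : (0:ℝ) ≤ x := le_of_lt hx.1
    have hbnd : IntegrableOn (fun y =>
        (1/12) * (1/(2*σ^2))^2 * Real.exp (-(a*x)) * Real.exp (-(a*y))
        + (1/4) * (1/(2*σ^2))^2 * Real.exp (-(a₁*x)) * Real.exp (-(a₁*y))) (Set.Ioi (0:ℝ)) :=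
      ((ie a 0 ha).const_mul _).add ((ie a₁ 0 ha₁).const_mul _)
    have step1 : (∫ y in Set.Ioi (0:ℝ),
        Q (Real.sqrt (g * (x + y) / N₀))
          * ((1 / (2 * σ^2)) * Real.exp (-x / (2 * σ^2)))
          * ((1 / (2 * σ^2)) * Real.exp (-y / (2 * σ^2))))
        ≤ ∫ y in Set.Ioi (0:ℝ),
          ((1/12) * (1/(2*σ^2))^2 * Real.exp (-(a*x)) * Real.exp (-(a*y))
          + (1/4) * (1/(2*σ^2))^2 * Real.exp (-(a₁*x)) * Real.exp (-(a₁*y))) := by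
      refine integral_mono_of_nonneg (Filter.Eventually.of_forall fun y => ?_) hbnd
        (Filter.eventually_of_mem (self_mem_ae_restrict measurableSet_Ioi) fun y hy => ?_)
      · exact mul_nonneg (mul_nonneg (hQnonneg _) (by positivity)) (by positivity)
      · have hy0 : (0:ℝ) ≤ y := le_of_lt hy
        calc Q (Real.sqrt (g * (x + y) / N₀))
              * ((1 / (2 * σ^2)) * Real.exp (-x / (2 * σ^2)))
              * ((1 / (2 * σ^2)) * Real.exp (-y / (2 * σ^2)))
            = Q (Real.sqrt (g * (x + y) / N₀))
              * (((1 / (2 * σ^2)) * Real.exp (-x / (2 * σ^2)))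
                * ((1 / (2 * σ^2)) * Real.exp (-y / (2 * σ^2)))) := by ring
          _ ≤ ((1/12) * Real.exp (-(g/(2*N₀))*(x+y)) + (1/4) * Real.exp (-(g₁/(2*N₀))*(x+y)))
              * (((1 / (2 * σ^2)) * Real.exp (-x / (2 * σ^2)))
                * ((1 / (2 * σ^2)) * Real.exp (-y / (2 * σ^2)))) :=
              mul_le_mul_of_nonneg_right (key (x+y) (by linarith)) (by positivity)
          _ = (1/12) * (1/(2*σ^2))^2 * Real.exp (-(a*x)) * Real.exp (-(a*y))
              + (1/4) * (1/(2*σ^2))^2 * Real.exp (-(a₁*x)) * Real.exp (-(a₁*y)) := by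
              have h1 := mea2 x y
              have h2 := mea2₁ x y
              linear_combination (1/12) * (1/(2*σ^2))^2 * h1 + (1/4) * (1/(2*σ^2))^2 * h2
    refine step1.trans_eq ?_
    rw [integral_add ((ie a 0 ha).const_mul _) ((ie a₁ 0 ha₁).const_mul _),
      MeasureTheory.integral_const_mul, MeasureTheory.integral_const_mul,
      exp_int_Ioi a 0 ha, exp_int_Ioi a₁ 0 ha₁]
    simp only [mul_zero, neg_zero, Real.exp_zero]
    ring
  -- Part 2 outer bound
  have hbO : IntegrableOn (fun x =>
      (1/12) * (1/(2*σ^2))^2 * (1/a) * Real.exp (-(a*x))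
      + (1/4) * (1/(2*σ^2))^2 * (1/a₁) * Real.exp (-(a₁*x))) (Set.Ioc (0:ℝ) τ) := by
    apply Continuous.integrableOn_Ioc
    refine Continuous.add ?_ ?_ <;>
      exact continuous_const.mul (Real.continuous_exp.comp ((continuous_const.mul continuous_id).neg))
  have hT2 : (∫ x in Set.Ioc (0:ℝ) τ, ∫ y in Set.Ioi (0:ℝ),
        Q (Real.sqrt (g * (x + y) / N₀))
          * ((1 / (2 * σ^2)) * Real.exp (-x / (2 * σ^2)))
          * ((1 / (2 * σ^2)) * Real.exp (-y / (2 * σ^2))))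
      ≤ (1/12) * (1/(2*σ^2))^2 * (1/a) * ((1 - Real.exp (-(a*τ)))/a)
        + (1/4) * (1/(2*σ^2))^2 * (1/a₁) * ((1 - Real.exp (-(a₁*τ)))/a₁) := by
    have step1 := integral_mono_of_nonneg
      (Filter.Eventually.of_forall fun x => hinner_nonneg x) hbO
      (Filter.eventually_of_mem (self_mem_ae_restrict measurableSet_Ioc) hinner)
    refine step1.trans_eq ?_
    have iA : IntegrableOn (fun x => Real.exp (-(a*x))) (Set.Ioc (0:ℝ) τ) :=
      ((ie a 0 ha).mono_set Set.Ioc_subset_Ioi_self)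
    have iA₁ : IntegrableOn (fun x => Real.exp (-(a₁*x))) (Set.Ioc (0:ℝ) τ) :=
      ((ie a₁ 0 ha₁).mono_set Set.Ioc_subset_Ioi_self)
    rw [integral_add (iA.const_mul _) (iA₁.const_mul _),
      MeasureTheory.integral_const_mul, MeasureTheory.integral_const_mul,
      exp_int_Ioc a τ ha hτ, exp_int_Ioc a₁ τ ha₁ hτ]
  -- combine
  have hmain := mul_le_mul_of_nonneg_left (add_le_add hT1 hT2) hc.le
  refine hmain.trans_eq ?_
  rw [hτa, hτa₁, hrs, hrs₁,
    show (ρ/σ)^4 = ((ρ/σ)^2)^2 by ring,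
    show (ρ₁/σ)^4 = ((ρ₁/σ)^2)^2 by ring, hrs, hrs₁]
  field_simp
  ring
end

section
/- The BER of joint detection in round J of the CCSR scheme satisfies the upper bound P_{eJ} ≤ Σ_{i=0}^{J} C(J,i) [ (c/12)(ρ/σ)^{2(J+i)} (e^{-τ/(2ρ²)})^{J-i} (1-e^{-τ/(2ρ²)})^{i} + (c/4)(ρ₁/σ)^{2(J+i)} (e^{-τ/(2ρ₁²)})^{J-i} (1-e^{-τ/(2ρ₁²)})^{i} ], where P_{eJ} is the expectation of c·Q applied to the combined SNR of the joint channel vectors over i.i.d. exponential channel gains. -/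
open MeasureTheory ProbabilityTheory Real

section CCSRHelpers
open Set
open scoped ENNReal NNReal

-- L3a: improper exponential integral
lemma expint1 (b t : ℝ) (hb : 0 < b) :
    ∫ x in Set.Ioi t, Real.exp (-(b*x)) = Real.exp (-(b*t)) / b := by
  have h := MeasureTheory.integral_comp_mul_left_Ioi (fun x => Real.exp (-x)) t hb
  simp only [smul_eq_mul] at h
  rw [h, integral_exp_neg_Ioi]
  field_simp

-- expMeasure as withDensity
lemma expMeasure_eq (r : ℝ) :
    expMeasure r = volume.withDensity (fun x => ENNReal.ofReal (exponentialPDFReal r x)) := rfl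

lemma exponentialPDFReal_eq' (r x : ℝ) :
    exponentialPDFReal r x = if 0 ≤ x then r * Real.exp (-(r*x)) else 0 := by
  rw [exponentialPDFReal, gammaPDFReal]
  simp [Real.rpow_one, Real.Gamma_one]

-- integral against expMeasure
lemma integral_expMeasure (r : ℝ) (hr : 0 < r) (f : ℝ → ℝ) :
    ∫ x, f x ∂(expMeasure r) = ∫ x, exponentialPDFReal r x * f x := by
  rw [expMeasure_eq]
  have hmeas : Measurable (fun x => (exponentialPDFReal r x).toNNReal) :=
    (measurable_exponentialPDFReal r).real_toNNReal
  have : (fun x => ENNReal.ofReal (exponentialPDFReal r x))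
      = (fun x => ((fun y => (exponentialPDFReal r y).toNNReal) x : ℝ≥0∞)) := rfl
  rw [this, integral_withDensity_eq_integral_smul hmeas]
  congr 1
  funext x
  rw [NNReal.smul_def, smul_eq_mul, Real.coe_toNNReal _ (exponentialPDFReal_nonneg hr x)]

lemma expMeasure_neg (r : ℝ) : (expMeasure r) (Set.Iio 0) = 0 := by
  rw [expMeasure_eq, withDensity_apply _ measurableSet_Iio]
  exact lintegral_exponentialPDF_of_nonpos le_rfl

lemma expMeasure_ae_nonneg (r : ℝ) : ∀ᵐ x ∂(expMeasure r), 0 ≤ x := by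
  rw [ae_iff]
  have : {x : ℝ | ¬ 0 ≤ x} = Set.Iio 0 := by ext x; simp
  rw [this]; exact expMeasure_neg r

-- ∫ e^{-ax} 1_{t ≤ x} d(expMeasure r) = r/(r+a) e^{-(r+a)t}
lemma coord_int (r a t : ℝ) (hr : 0 < r) (ha : 0 < a) (ht : 0 ≤ t) :
    ∫ x, Real.exp (-(a*x)) * (if t ≤ x then (1:ℝ) else 0) ∂(expMeasure r)
      = r/(r+a) * Real.exp (-((r+a)*t)) := by
  rw [integral_expMeasure r hr]
  have hpt : (fun x => exponentialPDFReal r x * (Real.exp (-(a*x)) * (if t ≤ x then (1:ℝ) else 0)))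
      = (Set.Ici t).indicator (fun x => r * Real.exp (-((r+a)*x))) := by
    funext x
    rw [exponentialPDFReal_eq']
    by_cases hx : t ≤ x
    · have h0 : 0 ≤ x := le_trans ht hx
      simp only [Set.indicator_of_mem (Set.mem_Ici.mpr hx), if_pos hx, if_pos h0]
      rw [mul_one, mul_assoc, ← Real.exp_add]
      ring_nf
    · simp [Set.indicator_of_notMem (fun h => hx (Set.mem_Ici.mp h)), if_neg hx]
  rw [hpt, integral_indicator measurableSet_Ici, integral_Ici_eq_integral_Ioi,
    integral_const_mul, expint1 _ _ (by positivity)]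
  field_simp

lemma coord_int_full (r a : ℝ) (hr : 0 < r) (ha : 0 < a) :
    ∫ x, Real.exp (-(a*x)) ∂(expMeasure r) = r/(r+a) := by
  have h := coord_int r a 0 hr ha le_rfl
  have hcong : ∫ x, Real.exp (-(a*x)) * (if (0:ℝ) ≤ x then (1:ℝ) else 0) ∂(expMeasure r)
      = ∫ x, Real.exp (-(a*x)) ∂(expMeasure r) := by
    apply integral_congr_ae
    filter_upwards [expMeasure_ae_nonneg r] with x hx
    simp [hx]
  rw [hcong] at h
  simpa using h

lemma integrable_expMeasure_bdd (r : ℝ) (hr : 0 < r) {f : ℝ → ℝ} (hm : Measurable f)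
    (hb : ∀ x, 0 ≤ x → |f x| ≤ 1) : Integrable f (expMeasure r) := by
  have : IsProbabilityMeasure (expMeasure r) := isProbabilityMeasure_expMeasure hr
  refine Integrable.mono' (integrable_const 1) hm.aestronglyMeasurable ?_
  filter_upwards [expMeasure_ae_nonneg r] with x hx
  simpa using hb x hx

lemma coord_int_lt (r a t : ℝ) (hr : 0 < r) (ha : 0 < a) (ht : 0 ≤ t) :
    ∫ x, Real.exp (-(a*x)) * (if x < t then (1:ℝ) else 0) ∂(expMeasure r)
      = r/(r+a) * (1 - Real.exp (-((r+a)*t))) := by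
  have key : (fun x => Real.exp (-(a*x)) * (if x < t then (1:ℝ) else 0))
      = (fun x => Real.exp (-(a*x)) - Real.exp (-(a*x)) * (if t ≤ x then (1:ℝ) else 0)) := by
    funext x
    by_cases hx : x < t
    · rw [if_pos hx, if_neg (not_le.mpr hx)]; ring
    · rw [if_neg hx, if_pos (not_lt.mp hx)]; ring
  have h1 : Integrable (fun x => Real.exp (-(a*x))) (expMeasure r) := by
    apply integrable_expMeasure_bdd r hr (((measurable_id.const_mul a).neg).exp)
    intro x hx
    rw [abs_of_nonneg (Real.exp_nonneg _)]
    exact Real.exp_le_one_iff.mpr (by show -(a * x) ≤ 0; nlinarith [mul_nonneg ha.le hx])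
  have h2 : Integrable (fun x => Real.exp (-(a*x)) * (if t ≤ x then (1:ℝ) else 0)) (expMeasure r) := by
    apply integrable_expMeasure_bdd r hr
    · exact (((measurable_id.const_mul a).neg).exp).mul
        (Measurable.ite (measurableSet_Ici (a := t)) measurable_const measurable_const)
    · intro x hx
      rw [abs_of_nonneg (by positivity)]
      by_cases h : t ≤ x
      · rw [if_pos h, mul_one]; exact Real.exp_le_one_iff.mpr (by simp only [id_eq, neg_nonpos]; positivity)
      · simp [if_neg h]
  rw [key, integral_sub h1 h2, coord_int_full r a hr ha, coord_int r a t hr ha ht]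
  ring

lemma integral_indep_prod {Ω ι : Type*} [MeasurableSpace Ω] {P : Measure Ω}
    [IsProbabilityMeasure P] {f : ι → Ω → ℝ}
    (hindep : iIndepFun f P)
    (hmeas : ∀ i, Measurable (f i)) (hnn : ∀ i ω, 0 ≤ f i ω) (s : Finset ι) :
    ∫ ω, ∏ i ∈ s, f i ω ∂P = ∏ i ∈ s, ∫ ω, f i ω ∂P := by
  classical
  induction s using Finset.induction_on with
  | empty => simp
  | @insert a s ha ih =>
    have hprod : (fun ω => ∏ i ∈ s, f i ω) = ∏ i ∈ s, f i := by
      funext ω; rw [Finset.prod_apply]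
    have hind : IndepFun (∏ i ∈ s, f i) (f a) P :=
      hindep.indepFun_finsetProd_of_notMem hmeas ha
    have hmul := hind.integral_mul_eq_mul_integral
      (hprod ▸ (Finset.measurable_prod s (fun i _ => hmeas i)).aemeasurable).aestronglyMeasurable
      (hmeas a).aestronglyMeasurable
    have step : ∫ ω, ∏ i ∈ insert a s, f i ω ∂P = ∫ ω, ((∏ i ∈ s, f i) * f a) ω ∂P := by
      congr 1; funext ω
      rw [Finset.prod_insert ha, Pi.mul_apply, Finset.prod_apply, mul_comm]
    rw [step, hmul, ← hprod, ih, Finset.prod_insert ha, mul_comm]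

lemma key_mgf {Ω : Type*} [MeasurableSpace Ω] (P : Measure Ω) [IsProbabilityMeasure P]
    (J : ℕ) (Z : (Fin J ⊕ Fin J) → Ω → ℝ) (hZmeas : ∀ k, Measurable (Z k))
    (hindep : iIndepFun Z P)
    (r : ℝ) (hr : 0 < r) (hdist : ∀ k, Measure.map (Z k) P = expMeasure r)
    (a τ : ℝ) (ha : 0 < a) (hτ : 0 ≤ τ) :
    ∫ ω, Real.exp (-(a * ((∑ j : Fin J, Z (Sum.inl j) ω)
          + ∑ j ∈ Finset.univ.filter (fun j : Fin J => Z (Sum.inl j) ω < τ),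
              Z (Sum.inr j) ω))) ∂P
      = ((r/(r+a))^2 * (1 - Real.exp (-((r+a)*τ)))
          + (r/(r+a)) * Real.exp (-((r+a)*τ)))^J := by
  classical
  set K : ℝ := r/(r+a) with hK
  set E : ℝ := Real.exp (-((r+a)*τ)) with hE
  -- coordinate functions
  set hIn : ℝ → ℝ := fun x => Real.exp (-(a*x)) * (if x < τ then 1 else 0) with hIn_def
  set hOut : ℝ → ℝ := fun x => Real.exp (-(a*x)) * (if τ ≤ x then 1 else 0) with hOut_def
  set hY : ℝ → ℝ := fun x => Real.exp (-(a*x)) with hY_def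
  have hexp_meas : Measurable hY := ((measurable_id.const_mul a).neg).exp
  have hIn_meas : Measurable hIn :=
    hexp_meas.mul (Measurable.ite (measurableSet_Iio (a := τ)) measurable_const measurable_const)
  have hOut_meas : Measurable hOut :=
    hexp_meas.mul (Measurable.ite (measurableSet_Ici (a := τ)) measurable_const measurable_const)
  set h : Finset (Fin J) → (Fin J ⊕ Fin J) → ℝ → ℝ :=
    fun T => Sum.elim (fun j => if j ∈ T then hIn else hOut)
      (fun j => if j ∈ T then hY else fun _ => 1) with h_def
  have h_meas : ∀ T k, Measurable (h T k) := by
    rintro T (j|j)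
    · by_cases hj : j ∈ T <;> simp only [h_def, Sum.elim_inl, hj, if_true, if_false]
      · exact hIn_meas
      · exact hOut_meas
    · by_cases hj : j ∈ T <;> simp only [h_def, Sum.elim_inr, hj, if_true, if_false]
      · exact hexp_meas
      · exact measurable_const
  have h_nn : ∀ T k x, 0 ≤ h T k x := by
    rintro T (j|j) x <;> by_cases hj : j ∈ T <;>
      simp only [h_def, Sum.elim_inl, Sum.elim_inr, hj, if_true, if_false, hIn_def, hOut_def,
        hY_def] <;> positivity
  have h_bd : ∀ T k x, 0 ≤ x → h T k x ≤ 1 := by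
    have hexp_le : ∀ x : ℝ, 0 ≤ x → Real.exp (-(a*x)) ≤ 1 := fun x hx =>
      Real.exp_le_one_iff.mpr (by simp only [neg_nonpos]; positivity)
    rintro T (j|j) x hx <;> by_cases hj : j ∈ T <;>
      simp only [h_def, Sum.elim_inl, Sum.elim_inr, hj, if_true, if_false, hIn_def, hOut_def,
        hY_def]
    · calc Real.exp (-(a*x)) * (if x < τ then (1:ℝ) else 0) ≤ Real.exp (-(a*x)) * 1 := by
            apply mul_le_mul_of_nonneg_left _ (Real.exp_nonneg _)
            split <;> norm_num
        _ ≤ 1 := by rw [mul_one]; exact hexp_le x hx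
    · calc Real.exp (-(a*x)) * (if τ ≤ x then (1:ℝ) else 0) ≤ Real.exp (-(a*x)) * 1 := by
            apply mul_le_mul_of_nonneg_left _ (Real.exp_nonneg _)
            split <;> norm_num
        _ ≤ 1 := by rw [mul_one]; exact hexp_le x hx
    · exact hexp_le x hx
    · exact le_rfl
  -- a.e. nonnegativity of coordinates
  have hae : ∀ᵐ ω ∂P, ∀ k, 0 ≤ Z k ω := by
    rw [ae_all_iff]
    intro k
    rw [ae_iff]
    have hset : {ω | ¬ 0 ≤ Z k ω} = (Z k) ⁻¹' (Set.Iio 0) := by ext ω; simp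
    rw [hset, ← Measure.map_apply (hZmeas k) measurableSet_Iio, hdist k]
    exact expMeasure_neg r
  -- pointwise product expansion
  have hpt : ∀ ω, Real.exp (-(a * ((∑ j : Fin J, Z (Sum.inl j) ω)
        + ∑ j ∈ Finset.univ.filter (fun j : Fin J => Z (Sum.inl j) ω < τ), Z (Sum.inr j) ω)))
      = ∑ T ∈ Finset.univ.powerset, ∏ k : Fin J ⊕ Fin J, h T k (Z k ω) := by
    intro ω
    have hW : (∑ j : Fin J, Z (Sum.inl j) ω)
        + ∑ j ∈ Finset.univ.filter (fun j : Fin J => Z (Sum.inl j) ω < τ), Z (Sum.inr j) ω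
        = ∑ j : Fin J, (Z (Sum.inl j) ω
            + if Z (Sum.inl j) ω < τ then Z (Sum.inr j) ω else 0) := by
      rw [Finset.sum_filter, ← Finset.sum_add_distrib]
    rw [hW]
    have harg : -(a * ∑ j : Fin J, (Z (Sum.inl j) ω
          + if Z (Sum.inl j) ω < τ then Z (Sum.inr j) ω else 0))
        = ∑ j : Fin J, -(a * (Z (Sum.inl j) ω
            + if Z (Sum.inl j) ω < τ then Z (Sum.inr j) ω else 0)) := by
      rw [Finset.mul_sum, ← Finset.sum_neg_distrib]
    rw [harg, Real.exp_sum]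
    have hterm : ∀ j : Fin J,
        Real.exp (-(a * (Z (Sum.inl j) ω
            + if Z (Sum.inl j) ω < τ then Z (Sum.inr j) ω else 0)))
        = hIn (Z (Sum.inl j) ω) * hY (Z (Sum.inr j) ω) + hOut (Z (Sum.inl j) ω) := by
      intro j
      by_cases hc : Z (Sum.inl j) ω < τ
      · rw [if_pos hc]
        simp only [hIn_def, hOut_def, hY_def, if_pos hc, if_neg (not_le.mpr hc)]
        rw [mul_one, mul_zero, add_zero, ← Real.exp_add]
        congr 1
        ring
      · rw [if_neg hc]
        simp only [hIn_def, hOut_def, hY_def, if_neg hc, if_pos (not_lt.mp hc)]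
        ring_nf
    rw [Finset.prod_congr rfl (fun j _ => hterm j), Finset.prod_add]
    apply Finset.sum_congr rfl
    intro T hT
    rw [Fintype.prod_sum_type]
    have hl : ∏ j : Fin J, h T (Sum.inl j) (Z (Sum.inl j) ω)
        = (∏ j ∈ Finset.univ \ T, hOut (Z (Sum.inl j) ω)) *
            ∏ j ∈ T, hIn (Z (Sum.inl j) ω) := by
      rw [← Finset.prod_sdiff (Finset.subset_univ T)]
      congr 1
      · exact Finset.prod_congr rfl fun j hj => by
          simp only [h_def, Sum.elim_inl, if_neg (Finset.mem_sdiff.mp hj).2]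
      · exact Finset.prod_congr rfl fun j hj => by
          simp only [h_def, Sum.elim_inl, if_pos hj]
    have hr' : ∏ j : Fin J, h T (Sum.inr j) (Z (Sum.inr j) ω)
        = ∏ j ∈ T, hY (Z (Sum.inr j) ω) := by
      rw [← Finset.prod_sdiff (Finset.subset_univ T)]
      have : ∏ j ∈ Finset.univ \ T, h T (Sum.inr j) (Z (Sum.inr j) ω) = 1 := by
        apply Finset.prod_eq_one
        intro j hj
        simp only [h_def, Sum.elim_inr, if_neg (Finset.mem_sdiff.mp hj).2]
      rw [this, one_mul]
      exact Finset.prod_congr rfl fun j hj => by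
        simp only [h_def, Sum.elim_inr, if_pos hj]
    rw [hl, hr', Finset.prod_mul_distrib]
    ring
  rw [integral_congr_ae (Filter.Eventually.of_forall hpt)]
  -- integrate term by term
  have hint : ∀ T : Finset (Fin J),
      Integrable (fun ω => ∏ k : Fin J ⊕ Fin J, h T k (Z k ω)) P := by
    intro T
    refine Integrable.mono' (integrable_const 1)
      (Finset.measurable_prod _ fun k _ => (h_meas T k).comp (hZmeas k)).aestronglyMeasurable ?_
    filter_upwards [hae] with ω hω
    rw [Real.norm_eq_abs, abs_of_nonneg (Finset.prod_nonneg fun k _ => h_nn T k _)]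
    exact Finset.prod_le_one (fun k _ => h_nn T k _) (fun k _ => h_bd T k _ (hω k))
  rw [integral_finset_sum _ fun T _ => hint T]
  -- factor each term by independence
  have hfact : ∀ T : Finset (Fin J),
      ∫ ω, ∏ k : Fin J ⊕ Fin J, h T k (Z k ω) ∂P
        = ∏ k : Fin J ⊕ Fin J, ∫ ω, h T k (Z k ω) ∂P := by
    intro T
    exact integral_indep_prod (hindep.comp (fun k => h T k) (h_meas T))
      (fun k => (h_meas T k).comp (hZmeas k)) (fun k ω => h_nn T k _) Finset.univ
  have hcoord : ∀ T : Finset (Fin J), ∀ k, ∫ ω, h T k (Z k ω) ∂P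
      = ∫ x, h T k x ∂(expMeasure r) := by
    intro T k
    rw [← hdist k, integral_map (hZmeas k).aemeasurable (h_meas T k).aestronglyMeasurable]
  have hval : ∀ T : Finset (Fin J),
      ∏ k : Fin J ⊕ Fin J, ∫ ω, h T k (Z k ω) ∂P
        = (∏ _j ∈ T, (K^2 * (1-E))) * ∏ _j ∈ Finset.univ \ T, (K * E) := by
    intro T
    have : IsProbabilityMeasure (expMeasure r) := isProbabilityMeasure_expMeasure hr
    simp only [hcoord]
    rw [Fintype.prod_sum_type]
    have hl : ∏ j : Fin J, ∫ x, h T (Sum.inl j) x ∂(expMeasure r)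
        = (∏ _j ∈ Finset.univ \ T, (K * E)) * ∏ _j ∈ T, (K * (1-E)) := by
      rw [← Finset.prod_sdiff (Finset.subset_univ T)]
      congr 1
      · refine Finset.prod_congr rfl fun j hj => ?_
        simp only [h_def, Sum.elim_inl, if_neg (Finset.mem_sdiff.mp hj).2, hOut_def]
        exact coord_int r a τ hr ha hτ
      · refine Finset.prod_congr rfl fun j hj => ?_
        simp only [h_def, Sum.elim_inl, if_pos hj, hIn_def]
        exact coord_int_lt r a τ hr ha hτ
    have hrr : ∏ j : Fin J, ∫ x, h T (Sum.inr j) x ∂(expMeasure r)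
        = ∏ _j ∈ T, K := by
      rw [← Finset.prod_sdiff (Finset.subset_univ T)]
      have h1 : ∏ j ∈ Finset.univ \ T, ∫ x, h T (Sum.inr j) x ∂(expMeasure r) = 1 := by
        apply Finset.prod_eq_one
        intro j hj
        simp only [h_def, Sum.elim_inr, if_neg (Finset.mem_sdiff.mp hj).2]
        simp
      rw [h1, one_mul]
      refine Finset.prod_congr rfl fun j hj => ?_
      simp only [h_def, Sum.elim_inr, if_pos hj, hY_def]
      exact coord_int_full r a hr ha
    rw [hl, hrr, mul_assoc, ← Finset.prod_mul_distrib, mul_comm]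
    congr 1
    exact Finset.prod_congr rfl fun j _ => by ring
  calc ∑ T ∈ Finset.univ.powerset, ∫ ω, ∏ k : Fin J ⊕ Fin J, h T k (Z k ω) ∂P
      = ∑ T ∈ Finset.univ.powerset,
          (∏ _j ∈ T, (K^2 * (1-E))) * ∏ _j ∈ Finset.univ \ T, (K * E) := by
        exact Finset.sum_congr rfl fun T _ => by rw [hfact T, hval T]
    _ = ∏ _j : Fin J, (K^2 * (1-E) + K * E) := (Finset.prod_add _ _ _).symm
    _ = (K^2 * (1-E) + K * E)^J := by rw [Finset.prod_const, Finset.card_univ, Fintype.card_fin]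

end CCSRHelpers

/-- Round-`J` CCSR BER upper bound. The full-transmission gains `X j` and the
selective-retransmission gains `Y j` are jointly i.i.d. exponential with rate
`1/(2σ²)` (i.e. density `(1/(2σ²)) e^{-x/(2σ²)}`). The BER of joint detection,
`P_{eJ} = E[c · Q(√(g·(∑ⱼ X j + ∑_{j : X j < τ} Y j)/N₀))]`, is bounded by
`∑_{i=0}^{J} C(J,i) [(c/12)(ρ/σ)^{2(J+i)} (e^{-τ/(2ρ²)})^{J-i} (1-e^{-τ/(2ρ²)})^{i}
 + (c/4)(ρ₁/σ)^{2(J+i)} (e^{-τ/(2ρ₁²)})^{J-i} (1-e^{-τ/(2ρ₁²)})^{i}]`. -/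
theorem ccsr_roundJ_ber_bound
    {Ω : Type*} [MeasurableSpace Ω] (P : Measure Ω) [IsProbabilityMeasure P]
    (σ c g N₀ τ : ℝ) (hσ : 0 < σ) (hc : 0 < c) (hg : 0 < g) (hN : 0 < N₀) (hτ : 0 ≤ τ)
    (J : ℕ) (hJ : 1 ≤ J)
    (Z : (Fin J ⊕ Fin J) → Ω → ℝ) (hZmeas : ∀ k, Measurable (Z k))
    (hindep : iIndepFun Z P)
    (hdist : ∀ k, Measure.map (Z k) P = expMeasure (1 / (2 * σ^2)))
    (Q : ℝ → ℝ) (hQmeas : Measurable Q) (hQnonneg : ∀ x, 0 ≤ Q x)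
    (hQbound : ∀ x, 0 ≤ x → Q x ≤ (1/12) * Real.exp (-x^2 / 2) + (1/4) * Real.exp (-2 * x^2 / 3))
    (ρ ρ₁ : ℝ)
    (hρ : ρ = Real.sqrt (σ^2 * N₀ / (g * σ^2 + N₀)))
    (hρ₁ : ρ₁ = Real.sqrt (σ^2 * N₀ / ((4 * g / 3) * σ^2 + N₀))) :
    (∫ ω, c * Q (Real.sqrt (g * ((∑ j : Fin J, Z (Sum.inl j) ω)
          + ∑ j ∈ Finset.univ.filter (fun j : Fin J => Z (Sum.inl j) ω < τ),
              Z (Sum.inr j) ω) / N₀)) ∂P)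
      ≤ ∑ i ∈ Finset.range (J + 1), (J.choose i : ℝ) *
          ((c/12) * (ρ/σ) ^ (2 * (J + i)) * (Real.exp (-τ / (2 * ρ^2))) ^ (J - i)
              * (1 - Real.exp (-τ / (2 * ρ^2))) ^ i
            + (c/4) * (ρ₁/σ) ^ (2 * (J + i)) * (Real.exp (-τ / (2 * ρ₁^2))) ^ (J - i)
              * (1 - Real.exp (-τ / (2 * ρ₁^2))) ^ i) := by
  classical
  set lam : ℝ := 1 / (2 * σ^2) with hlam_def
  have hlam : 0 < lam := by positivity
  set a1 : ℝ := g / (2 * N₀) with ha1_def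
  set a2 : ℝ := 2 * g / (3 * N₀) with ha2_def
  have ha1 : 0 < a1 := by positivity
  have ha2 : 0 < a2 := by positivity
  set W : Ω → ℝ := fun ω => (∑ j : Fin J, Z (Sum.inl j) ω)
      + ∑ j ∈ Finset.univ.filter (fun j : Fin J => Z (Sum.inl j) ω < τ),
          Z (Sum.inr j) ω with hW_def
  have hWmeas : Measurable W := by
    have : W = fun ω => (∑ j : Fin J, Z (Sum.inl j) ω)
        + ∑ j : Fin J, (if Z (Sum.inl j) ω < τ then Z (Sum.inr j) ω else 0) := by
      funext ω; rw [hW_def]; simp only [Finset.sum_filter]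
    rw [this]
    apply Measurable.add
    · exact Finset.measurable_sum _ fun j _ => hZmeas (Sum.inl j)
    · apply Finset.measurable_sum
      intro j _
      exact Measurable.ite ((hZmeas (Sum.inl j)) measurableSet_Iio)
        (hZmeas (Sum.inr j)) measurable_const
  have hae : ∀ᵐ ω ∂P, ∀ k, 0 ≤ Z k ω := by
    rw [ae_all_iff]
    intro k
    rw [ae_iff]
    have hset : {ω | ¬ 0 ≤ Z k ω} = (Z k) ⁻¹' (Set.Iio 0) := by ext ω; simp
    rw [hset, ← Measure.map_apply (hZmeas k) measurableSet_Iio, hdist k]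
    exact expMeasure_neg _
  have hWnn : ∀ᵐ ω ∂P, 0 ≤ W ω := by
    filter_upwards [hae] with ω hω
    rw [hW_def]
    apply add_nonneg
    · exact Finset.sum_nonneg fun j _ => hω (Sum.inl j)
    · exact Finset.sum_nonneg fun j _ => hω (Sum.inr j)
  -- integrability of the exponential bounds
  have hint : ∀ a : ℝ, 0 < a → Integrable (fun ω => Real.exp (-(a * W ω))) P := by
    intro a ha
    refine Integrable.mono' (integrable_const 1)
      (((hWmeas.const_mul a).neg).exp).aestronglyMeasurable ?_
    filter_upwards [hWnn] with ω hω
    rw [Real.norm_eq_abs, abs_of_nonneg (Real.exp_nonneg _)]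
    exact Real.exp_le_one_iff.mpr (by simp only [neg_nonpos]; positivity)
  have hint1 := hint a1 ha1
  have hint2 := hint a2 ha2
  -- step A: pointwise bound
  have hstepA : (∫ ω, c * Q (Real.sqrt (g * W ω / N₀)) ∂P)
      ≤ ∫ ω, ((c/12) * Real.exp (-(a1 * W ω)) + (c/4) * Real.exp (-(a2 * W ω))) ∂P := by
    apply integral_mono_of_nonneg
    · exact Filter.Eventually.of_forall fun ω => mul_nonneg hc.le (hQnonneg _)
    · exact (hint1.const_mul _).add (hint2.const_mul _)

    · filter_upwards [hWnn] with ω hω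
      have hx : (0:ℝ) ≤ Real.sqrt (g * W ω / N₀) := Real.sqrt_nonneg _
      have hsq : (Real.sqrt (g * W ω / N₀))^2 = g * W ω / N₀ :=
        Real.sq_sqrt (by positivity)
      have hQb := hQbound _ hx
      rw [hsq] at hQb
      have h1 : -(g * W ω / N₀) / 2 = -(a1 * W ω) := by rw [ha1_def]; ring
      have h2 : -2 * (g * W ω / N₀) / 3 = -(a2 * W ω) := by rw [ha2_def]; ring
      rw [h1, h2] at hQb
      calc c * Q (Real.sqrt (g * W ω / N₀))
          ≤ c * ((1/12) * Real.exp (-(a1 * W ω)) + (1/4) * Real.exp (-(a2 * W ω))) :=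
            mul_le_mul_of_nonneg_left hQb hc.le
        _ = (c/12) * Real.exp (-(a1 * W ω)) + (c/4) * Real.exp (-(a2 * W ω)) := by ring
  -- step B/C: compute the RHS integral
  have hI1 := key_mgf P J Z hZmeas hindep lam hlam hdist a1 τ ha1 hτ
  have hI2 := key_mgf P J Z hZmeas hindep lam hlam hdist a2 τ ha2 hτ
  rw [integral_add (hint1.const_mul _) (hint2.const_mul _)] at hstepA
  simp only [integral_const_mul] at hstepA
  have hI1' : ∫ ω, Real.exp (-(a1 * W ω)) ∂P
      = ((lam/(lam+a1))^2 * (1 - Real.exp (-((lam+a1)*τ)))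
          + (lam/(lam+a1)) * Real.exp (-((lam+a1)*τ)))^J := hI1
  have hI2' : ∫ ω, Real.exp (-(a2 * W ω)) ∂P
      = ((lam/(lam+a2))^2 * (1 - Real.exp (-((lam+a2)*τ)))
          + (lam/(lam+a2)) * Real.exp (-((lam+a2)*τ)))^J := hI2
  rw [hI1', hI2'] at hstepA
  have hgoalL : (∫ ω, c * Q (Real.sqrt (g * W ω / N₀)) ∂P)
      = c * ∫ ω, Q (Real.sqrt (g * W ω / N₀)) ∂P := MeasureTheory.integral_const_mul c _
  refine le_trans (le_of_eq hgoalL) (le_trans hstepA ?_)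
  -- constants
  set K1 : ℝ := lam/(lam+a1) with hK1_def
  set K2 : ℝ := lam/(lam+a2) with hK2_def
  set E1 : ℝ := Real.exp (-((lam+a1)*τ)) with hE1_def
  set E2 : ℝ := Real.exp (-((lam+a2)*τ)) with hE2_def
  have hd1 : (0:ℝ) < g * σ^2 + N₀ := by positivity
  have hd2 : (0:ℝ) < (4 * g / 3) * σ^2 + N₀ := by positivity
  have hρ2 : ρ^2 = σ^2 * N₀ / (g * σ^2 + N₀) := by
    rw [hρ]; exact Real.sq_sqrt (by positivity)
  have hρ₁2 : ρ₁^2 = σ^2 * N₀ / ((4 * g / 3) * σ^2 + N₀) := by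
    rw [hρ₁]; exact Real.sq_sqrt (by positivity)
  have hρpos : (0:ℝ) < ρ^2 := by rw [hρ2]; positivity
  have hρ₁pos : (0:ℝ) < ρ₁^2 := by rw [hρ₁2]; positivity
  have hKρ : (ρ/σ)^2 = K1 := by
    rw [div_pow, hρ2, hK1_def, hlam_def, ha1_def]
    field_simp
    ring
  have hKρ₁ : (ρ₁/σ)^2 = K2 := by
    rw [div_pow, hρ₁2, hK2_def, hlam_def, ha2_def]
    field_simp
    ring
  have hEρ : -τ / (2 * ρ^2) = -((lam+a1)*τ) := by
    rw [hρ2, hlam_def, ha1_def]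
    field_simp
    ring
  have hEρ₁ : -τ / (2 * ρ₁^2) = -((lam+a2)*τ) := by
    rw [hρ₁2, hlam_def, ha2_def]
    field_simp
    ring
  -- binomial expansion
  rw [add_pow, add_pow, Finset.mul_sum, Finset.mul_sum, ← Finset.sum_add_distrib]
  apply Finset.sum_le_sum
  intro i hi
  have hiJ : i ≤ J := Nat.lt_succ_iff.mp (Finset.mem_range.mp hi)
  have hpow1 : (K1^2 * (1-E1))^i * (K1*E1)^(J-i) = K1^(J+i) * E1^(J-i) * (1-E1)^i := by
    rw [mul_pow, mul_pow, ← pow_mul]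
    have : 2 * i + (J - i) = J + i := by omega
    rw [show (K1^(2*i) * (1-E1)^i) * (K1^(J-i) * E1^(J-i))
        = (K1^(2*i) * K1^(J-i)) * (E1^(J-i) * (1-E1)^i) by ring, ← pow_add, this, mul_assoc]
  have hpow2 : (K2^2 * (1-E2))^i * (K2*E2)^(J-i) = K2^(J+i) * E2^(J-i) * (1-E2)^i := by
    rw [mul_pow, mul_pow, ← pow_mul]
    have : 2 * i + (J - i) = J + i := by omega
    rw [show (K2^(2*i) * (1-E2)^i) * (K2^(J-i) * E2^(J-i))
        = (K2^(2*i) * K2^(J-i)) * (E2^(J-i) * (1-E2)^i) by ring, ← pow_add, this, mul_assoc]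
  rw [hEρ, hEρ₁]
  have hKpow1 : (ρ/σ)^(2*(J+i)) = K1^(J+i) := by rw [pow_mul, hKρ]
  have hKpow2 : (ρ₁/σ)^(2*(J+i)) = K2^(J+i) := by rw [pow_mul, hKρ₁]
  rw [hKpow1, hKpow2, ← hE1_def, ← hE2_def]
  calc c / 12 * ((K1^2 * (1-E1))^i * (K1*E1)^(J-i) * (J.choose i : ℝ))
        + c / 4 * ((K2^2 * (1-E2))^i * (K2*E2)^(J-i) * (J.choose i : ℝ))
      = (J.choose i : ℝ) * (c/12 * (K1^(J+i) * E1^(J-i) * (1-E1)^i)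
          + c/4 * (K2^(J+i) * E2^(J-i) * (1-E2)^i)) := by
        rw [← hpow1, ← hpow2]; ring
    _ ≤ (J.choose i : ℝ) * (c/12 * K1^(J+i) * E1^(J-i) * (1-E1)^i
          + c/4 * K2^(J+i) * E2^(J-i) * (1-E2)^i) := by
        exact le_of_eq (by ring)
end
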